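/- In U(O), for all m ∈ ℕ+, u ∈ ℤ≥0, and j,l ∈ ℕ+: [p_m^Γ(j,l), D_{u,1}^{Γ,+}(j,l)] = 2 D_{m+u,1}^{Γ,+}(j,l). -/

import Mathlib

open Finset

noncomputable section

/- Setting: `A` plays the role of the universal enveloping algebra `U(O)` of the
Onsager algebra.  `X m = x_m^{Γ,+}`, `Y m = x_m^{Γ,-}`, `H m = h_m^Γ` (indexed by `ℤ`
via the conventions `x_{-m}^{Γ,±} = -x_m^{Γ,±}`, `x_0^{Γ,±} = 0`, `h_{-m}^Γ = h_m^Γ`),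
and the Lie brackets of `O` are imposed as commutator relations. -/
variable {A : Type*} [Ring A] [Algebra ℂ A]

/-- `Λ^Γ_{j,l,1} = -(h^Γ_{j+l} - h^Γ_{j-l})`. -/
def Lam1 (H : ℤ → A) (j l : ℤ) : A := -(H (j + l) - H (j - l))

/-- `D^{Γ,+}_{u,1}(j,l)`. -/
def Dp (X H : ℤ → A) (j l : ℤ) : ℕ → A
  | 0 => X j
  | u + 1 => ((1 : ℂ) / 2) • ⁅Dp X H j l u, Lam1 H j l⁆

/-- `D^{Γ,-}_{u,1}(j,l)`. -/
def Dm (Y H : ℤ → A) (j l : ℤ) : ℕ → A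
  | 0 => Y l
  | u + 1 => (-((1 : ℂ) / 2)) • ⁅Dm Y H j l u, Lam1 H j l⁆

/-- `p^Γ_s(j,l) = [x_j^{Γ,+}, D^{Γ,-}_{s-1,1}(j,l)]`. -/
def pG (X Y H : ℤ → A) (j l : ℤ) (s : ℕ) : A := ⁅X j, Dm Y H j l (s - 1)⁆

/-- `Λ^Γ_{j,l,n}`, via the recursion `n Λ_n = -∑_{i=1}^n p_i Λ_{n-i}` equivalent to the
exponential generating series definition. -/
def Lam (X Y H : ℤ → A) (j l : ℤ) : ℕ → A
  | 0 => 1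
  | n + 1 =>
      (-(((n : ℂ) + 1)⁻¹)) •
        ∑ i ∈ Finset.range (n + 1), pG X Y H j l (i + 1) * Lam X Y H j l (n - i)
  decreasing_by omega

/-- `D^{Γ,+}_{u,v}(j,l)`. -/
def DvP (X H : ℤ → A) (j l : ℤ) : ℕ → ℕ → A
  | u, 0 => if u = 0 then 1 else 0
  | u, v + 1 =>
      (((v : ℂ) + 1)⁻¹) • ∑ i ∈ Finset.range (u + 1), Dp X H j l i * DvP X H j l (u - i) v

/-- `D^{Γ,-}_{u,v}(j,l)`. -/
def DvM (Y H : ℤ → A) (j l : ℤ) : ℕ → ℕ → A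
  | u, 0 => if u = 0 then 1 else 0
  | u, v + 1 =>
      (((v : ℂ) + 1)⁻¹) • ∑ i ∈ Finset.range (u + 1), Dm Y H j l i * DvM Y H j l (u - i) v

namespace OnsAux

set_option linter.unusedSectionVars false

lemma r_lie_def (a b : A) : ⁅a, b⁆ = a * b - b * a := rfl

lemma r_add_lie (a b c : A) : ⁅a + b, c⁆ = ⁅a, c⁆ + ⁅b, c⁆ := by
  simp only [r_lie_def]; noncomm_ring

lemma r_lie_add (a b c : A) : ⁅a, b + c⁆ = ⁅a, b⁆ + ⁅a, c⁆ := by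
  simp only [r_lie_def]; noncomm_ring

lemma r_zero_lie (a : A) : ⁅(0 : A), a⁆ = 0 := by simp [r_lie_def]

lemma r_lie_zero (a : A) : ⁅a, (0 : A)⁆ = 0 := by simp [r_lie_def]

lemma r_smul_lie (t : ℤ) (a b : A) : ⁅t • a, b⁆ = t • ⁅a, b⁆ := by
  rw [r_lie_def, r_lie_def, smul_mul_assoc, mul_smul_comm, smul_sub]

lemma r_lie_smul (t : ℤ) (a b : A) : ⁅a, t • b⁆ = t • ⁅a, b⁆ := by
  rw [r_lie_def, r_lie_def, smul_mul_assoc, mul_smul_comm, smul_sub]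

lemma r_lie_skew (a b : A) : -⁅b, a⁆ = ⁅a, b⁆ := by
  simp only [r_lie_def]; noncomm_ring

def nn : AddMonoidAlgebra ℤ ℤ →+* AddMonoidAlgebra ℤ ℤ :=
{ toFun := AddMonoidAlgebra.mapDomain (AddEquiv.neg ℤ),
  map_one' := AddMonoidAlgebra.mapDomain_one _,
  map_mul' := AddMonoidAlgebra.mapDomain_mul _,
  map_zero' := by
    show AddMonoidAlgebra.mapDomain (AddEquiv.neg ℤ) (0 : AddMonoidAlgebra ℤ ℤ) = 0
    exact AddMonoidAlgebra.mapDomain_zero _,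
  map_add' := fun _ _ => AddMonoidAlgebra.mapDomain_add _ _ _ }

def e (s : ℤ) : AddMonoidAlgebra ℤ ℤ := AddMonoidAlgebra.single s 1

lemma nn_single (s : ℤ) (c : ℤ) :
    nn (AddMonoidAlgebra.single s c) = AddMonoidAlgebra.single (-s) c := by
  show AddMonoidAlgebra.mapDomain (AddEquiv.neg ℤ) (AddMonoidAlgebra.single s c) =
    AddMonoidAlgebra.single (-s) c
  rw [AddMonoidAlgebra.mapDomain_single]; rfl

lemma nn_e (s : ℤ) : nn (e s) = e (-s) := nn_single s 1

lemma single_mul (s t b c : ℤ) :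
    (AddMonoidAlgebra.single s b : AddMonoidAlgebra ℤ ℤ) * AddMonoidAlgebra.single t c =
      AddMonoidAlgebra.single (s + t) (b * c) :=
  AddMonoidAlgebra.single_mul_single ..

lemma e_mul (s t : ℤ) : e s * e t = e (s + t) := by
  rw [e, e, single_mul, one_mul]; rfl

def ev (F : ℤ → A) : AddMonoidAlgebra ℤ ℤ →ₗ[ℤ] A :=
  (Finsupp.linearCombination ℤ F).comp
    (AddMonoidAlgebra.coeffAddEquiv (R := ℤ) (M := ℤ)).toAddMonoidHom.toIntLinearMap

lemma ev_single (F : ℤ → A) (s c : ℤ) : ev F (AddMonoidAlgebra.single s c) = c • F s := by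
  show Finsupp.linearCombination ℤ F (Finsupp.single s c) = c • F s
  rw [Finsupp.linearCombination_single]

lemma ev_e (F : ℤ → A) (s : ℤ) : ev F (e s) = F s := by rw [e, ev_single, one_smul]

variable (X Y H : ℤ → A)

lemma evH_lie_evX (hXneg : ∀ m : ℤ, X (-m) = -X m)
    (hHX : ∀ k j : ℤ, ⁅H k, X j⁆ = 2 • (X (j + k) - X (k - j)))
    (f f' : AddMonoidAlgebra ℤ ℤ) :
    ⁅ev H f, ev X f'⁆ = 2 • ev X ((f + nn f) * f') := by
  induction f using AddMonoidAlgebra.induction_linear with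
  | zero => simp [r_zero_lie]
  | add a b ha hb =>
      simp only [map_add, r_add_lie, ha, hb, add_mul, smul_add]
      abel
  | single a b =>
      induction f' using AddMonoidAlgebra.induction_linear with
      | zero => simp [r_lie_zero]
      | add a' b' ha' hb' =>
          simp only [map_add, r_lie_add, mul_add, smul_add, ha', hb']
      | single s c =>
          rw [ev_single, ev_single, nn_single, add_mul, single_mul, single_mul,
            map_add, ev_single, ev_single, r_smul_lie, r_lie_smul, hHX]
          have h1 : (-a + s) = -(a - s) := by ring
          rw [h1, hXneg (a - s), add_comm s a]
          simp only [two_nsmul, smul_add, smul_sub, smul_neg, mul_smul]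
          abel

lemma evH_lie_evY (hHY : ∀ k l : ℤ, ⁅H k, Y l⁆ = -(2 • (Y (l + k) + Y (l - k))))
    (f f' : AddMonoidAlgebra ℤ ℤ) :
    ⁅ev H f, ev Y f'⁆ = -(2 • ev Y ((f + nn f) * f')) := by
  induction f using AddMonoidAlgebra.induction_linear with
  | zero => simp [r_zero_lie]
  | add a b ha hb =>
      simp only [map_add, r_add_lie, ha, hb, add_mul, smul_add, neg_add]
      abel
  | single a b =>
      induction f' using AddMonoidAlgebra.induction_linear with
      | zero => simp [r_lie_zero]
      | add a' b' ha' hb' =>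
          simp only [map_add, r_lie_add, mul_add, smul_add, ha', hb', neg_add]
      | single s c =>
          rw [ev_single, ev_single, nn_single, add_mul, single_mul, single_mul,
            map_add, ev_single, ev_single, r_smul_lie, r_lie_smul, hHY]
          have h1 : (-a + s) = s - a := by ring
          have h2 : (a + s) = s + a := by ring
          rw [h1, h2]
          simp only [two_nsmul, smul_add, smul_neg, neg_add, mul_smul]

lemma X_lie_evY (hXY : ∀ j l : ℤ, ⁅X j, Y l⁆ = H (j + l) - H (j - l))
    (k : ℤ) (f : AddMonoidAlgebra ℤ ℤ) :
    ⁅X k, ev Y f⁆ = ev H (e k * f - e k * nn f) := by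
  induction f using AddMonoidAlgebra.induction_linear with
  | zero => simp [r_lie_zero]
  | add a b ha hb =>
      simp only [map_add, r_lie_add, mul_add, ha, hb]
      rw [← map_add]
      congr 1
      abel
  | single s c =>
      rw [ev_single, r_lie_smul, hXY, nn_single, e, single_mul, single_mul,
        map_sub, ev_single, ev_single, one_mul, smul_sub]
      have h1 : k + -s = k - s := by ring
      rw [h1]

end OnsAux

open OnsAux in
theorem bracket_p_Dp' (X Y H : ℤ → A)
    (hXneg : ∀ m : ℤ, X (-m) = -X m)
    (hXY : ∀ j l : ℤ, ⁅X j, Y l⁆ = H (j + l) - H (j - l))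
    (hHX : ∀ k j : ℤ, ⁅H k, X j⁆ = 2 • (X (j + k) - X (k - j)))
    (hHY : ∀ k l : ℤ, ⁅H k, Y l⁆ = -(2 • (Y (l + k) + Y (l - k))))
    (m : ℕ) (hm : 1 ≤ m) (u : ℕ) (j l : ℤ) :
    ⁅pG X Y H j l m, Dp X H j l u⁆ = 2 • Dp X H j l (m + u) := by
  set g : AddMonoidAlgebra ℤ ℤ := e (j + l) + e (-(j + l)) - e (j - l) - e (l - j) with hg
  set L : AddMonoidAlgebra ℤ ℤ := e (j - l) - e (j + l) with hL
  have hnng : nn g = g := by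
    rw [hg, map_sub, map_sub, map_add, nn_e, nn_e, nn_e, nn_e, neg_neg,
      show -(j - l) = l - j from by ring, show -(l - j) = j - l from by ring]
    abel
  have hnnL : L + nn L = -g := by
    rw [hL, map_sub, nn_e, nn_e, show -(j - l) = l - j from by ring, hg]
    abel
  have hLam : Lam1 H j l = ev H L := by
    rw [hL, map_sub, ev_e, ev_e, Lam1]; abel
  have halfsmul : ∀ a : A, ((1:ℂ)/2) • (2 • a) = a := by
    intro a
    rw [← Nat.cast_smul_eq_nsmul ℂ 2 a, smul_smul]; norm_num
  have hDp : ∀ u : ℕ, Dp X H j l u = ev X (g ^ u * e j) := by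
    intro u
    induction u with
    | zero => rw [Dp, pow_zero, one_mul, ev_e]
    | succ u ih =>
        rw [Dp, ih, hLam, ← r_lie_skew, smul_neg, evH_lie_evX X H hXneg hHX, halfsmul,
          hnnL, neg_mul, map_neg, neg_neg, ← mul_assoc, ← pow_succ']
  have hDm : ∀ u : ℕ, Dm Y H j l u = ev Y (g ^ u * e l) := by
    intro u
    induction u with
    | zero => rw [Dm, pow_zero, one_mul, ev_e]
    | succ u ih =>
        rw [Dm, ih, hLam, ← r_lie_skew, smul_neg, neg_smul, neg_neg,
          evH_lie_evY Y H hHY, smul_neg, halfsmul, hnnL, neg_mul, map_neg, neg_neg,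
          ← mul_assoc, ← pow_succ']
  obtain ⟨n, rfl⟩ : ∃ n, m = n + 1 := ⟨m - 1, (Nat.succ_pred_eq_of_pos hm).symm⟩
  have hpG : pG X Y H j l (n + 1) = ev H (-(g ^ n * L)) := by
    rw [pG, show n + 1 - 1 = n from rfl, hDm, X_lie_evY X Y H hXY, map_mul, map_pow,
      hnng, nn_e]
    congr 1
    rw [hL, show e j * (g ^ n * e l) = g ^ n * e (j + l) from by
        rw [← mul_assoc, mul_comm (e j) (g ^ n), mul_assoc, e_mul],
      show e j * (g ^ n * e (-l)) = g ^ n * e (j - l) from by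
        rw [← mul_assoc, mul_comm (e j) (g ^ n), mul_assoc, e_mul,
          show j + -l = j - l from by ring],
      mul_sub, neg_sub]
  have key : (-(g ^ n * L) + nn (-(g ^ n * L))) * (g ^ u * e j) = g ^ (n + 1 + u) * e j := by
    rw [map_neg, map_mul, map_pow, hnng, ← neg_add, ← mul_add, hnnL, mul_neg, neg_neg,
      ← pow_succ, ← mul_assoc, ← pow_add]
  rw [hpG, hDp, evH_lie_evX X H hXneg hHX, key, hDp]


/-- `[p_m^Γ(j,l), D^{Γ,+}_{u,1}(j,l)] = 2 D^{Γ,+}_{m+u,1}(j,l)`. -/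
theorem bracket_p_Dp (X Y H : ℤ → A)
    (hXneg : ∀ m : ℤ, X (-m) = -X m) (hX0 : X 0 = 0)
    (hYneg : ∀ m : ℤ, Y (-m) = -Y m) (hY0 : Y 0 = 0)
    (hHneg : ∀ m : ℤ, H (-m) = H m)
    (hXY : ∀ j l : ℤ, ⁅X j, Y l⁆ = H (j + l) - H (j - l))
    (hHX : ∀ k j : ℤ, ⁅H k, X j⁆ = 2 • (X (j + k) - X (k - j)))
    (hHY : ∀ k l : ℤ, ⁅H k, Y l⁆ = -(2 • (Y (l + k) + Y (l - k))))
    (hHH : ∀ k m : ℤ, ⁅H k, H m⁆ = 0)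
    (m : ℕ) (hm : 1 ≤ m) (u : ℕ) (j l : ℕ+) :
    ⁅pG X Y H ((j : ℕ) : ℤ) ((l : ℕ) : ℤ) m, Dp X H ((j : ℕ) : ℤ) ((l : ℕ) : ℤ) u⁆ =
      2 • Dp X H ((j : ℕ) : ℤ) ((l : ℕ) : ℤ) (m + u) :=
  bracket_p_Dp' X Y H hXneg hXY hHX hHY m hm u _ _
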